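/- Let b ≤ −2 and let F = F_{−1,b}. Then: (i) (−b, −1) is a fixed point of F; (ii) the set P = {(−b−2, −1), (−b−2, −3), (−b, −5), (−b+4, −5), (−b+8, −1), (−b+8, 7), (−b, 1)} is a periodic orbit of F of minimal period 7, with F mapping each listed point to the next one and the last listed point to the first; (iii) the set Q = {(−b−16/15, −1/15), (−b−2, −17/15), (−b−28/15, −47/15), (−b+4/15, −5), (−b+64/15, −71/15), (−b+8, −7/15), (−b+112/15, 113/15)} is a periodic orbit of F of minimal period 7, with F mapping each listed point to the next one and the last listed point to the first. -/
import Mathlib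


/-- The piecewise linear map `F_{a,b}(x,y) = (|x| - y + a, x - |y| + b)`. -/
noncomputable def F (a b : ℝ) : ℝ × ℝ → ℝ × ℝ :=
  fun p => (|p.1| - p.2 + a, p.1 - |p.2| + b)

/-- `S` is a periodic orbit of `f` of minimal period `n`: it is the (finite) orbit
`{p, f p, …, f^[n-1] p}` of some periodic point `p` of minimal period `n`. -/
def IsPeriodicOrbit (f : ℝ × ℝ → ℝ × ℝ) (n : ℕ) (S : Set (ℝ × ℝ)) : Prop :=
  ∃ p : ℝ × ℝ, Function.minimalPeriod f p = n ∧ 0 < n ∧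
    S = (fun k : ℕ => f^[k] p) '' Set.Iio n

/-- For `b ≤ -2` and `F = F_{-1,b}`: `(-b, -1)` is a fixed point, and the sets `P`
and `Q` below are periodic orbits of minimal period 7, `F` mapping each listed point
to the next one and the last to the first. -/

private lemma orbit7 {f : ℝ × ℝ → ℝ × ℝ} {p0 p1 p2 p3 p4 p5 p6 : ℝ × ℝ}
    (h0 : f p0 = p1) (h1 : f p1 = p2) (h2 : f p2 = p3) (h3 : f p3 = p4)
    (h4 : f p4 = p5) (h5 : f p5 = p6) (h6 : f p6 = p0) (hne : p0 ≠ p1) :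
    IsPeriodicOrbit f 7 {p0, p1, p2, p3, p4, p5, p6} := by
  have e0 : f^[0] p0 = p0 := rfl
  have e1 : f^[1] p0 = p1 := by simp [h0]
  have e2 : f^[2] p0 = p2 := by rw [Function.iterate_succ_apply', e1, h1]
  have e3 : f^[3] p0 = p3 := by rw [Function.iterate_succ_apply', e2, h2]
  have e4 : f^[4] p0 = p4 := by rw [Function.iterate_succ_apply', e3, h3]
  have e5 : f^[5] p0 = p5 := by rw [Function.iterate_succ_apply', e4, h4]
  have e6 : f^[6] p0 = p6 := by rw [Function.iterate_succ_apply', e5, h5]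
  have e7 : f^[7] p0 = p0 := by rw [Function.iterate_succ_apply', e6, h6]
  have hper : Function.IsPeriodicPt f 7 p0 := e7
  have hdvd : Function.minimalPeriod f p0 ∣ 7 := hper.minimalPeriod_dvd
  have hmp : Function.minimalPeriod f p0 = 7 := by
    rcases (Nat.Prime.eq_one_or_self_of_dvd (by norm_num) _ hdvd) with h | h
    · exfalso
      have : Function.IsFixedPt f p0 := Function.minimalPeriod_eq_one_iff_isFixedPt.mp h
      exact hne (this.symm.trans h0)
    · exact h
  refine ⟨p0, hmp, by norm_num, ?_⟩
  have hIio : (Set.Iio 7 : Set ℕ) = {0,1,2,3,4,5,6} := by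
    ext n; simp [Set.mem_Iio]; omega
  rw [hIio]
  simp [Set.image_insert_eq, e0, e1, e2, e3, e4, e5, e6, h0, h1, h2, h3, h4, h5]

theorem case_b_le_neg_two (b : ℝ) (hb : b ≤ -2) :
    F (-1) b (-b, -1) = (-b, -1) ∧
    (IsPeriodicOrbit (F (-1) b) 7
        {(-b-2, -1), (-b-2, -3), (-b, -5), (-b+4, -5), (-b+8, -1), (-b+8, 7), (-b, 1)} ∧
      F (-1) b (-b-2, -1) = (-b-2, -3) ∧
      F (-1) b (-b-2, -3) = (-b, -5) ∧
      F (-1) b (-b, -5) = (-b+4, -5) ∧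
      F (-1) b (-b+4, -5) = (-b+8, -1) ∧
      F (-1) b (-b+8, -1) = (-b+8, 7) ∧
      F (-1) b (-b+8, 7) = (-b, 1) ∧
      F (-1) b (-b, 1) = (-b-2, -1)) ∧
    (IsPeriodicOrbit (F (-1) b) 7
        {(-b-16/15, -1/15), (-b-2, -17/15), (-b-28/15, -47/15), (-b+4/15, -5),
         (-b+64/15, -71/15), (-b+8, -7/15), (-b+112/15, 113/15)} ∧
      F (-1) b (-b-16/15, -1/15) = (-b-2, -17/15) ∧
      F (-1) b (-b-2, -17/15) = (-b-28/15, -47/15) ∧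
      F (-1) b (-b-28/15, -47/15) = (-b+4/15, -5) ∧
      F (-1) b (-b+4/15, -5) = (-b+64/15, -71/15) ∧
      F (-1) b (-b+64/15, -71/15) = (-b+8, -7/15) ∧
      F (-1) b (-b+8, -7/15) = (-b+112/15, 113/15) ∧
      F (-1) b (-b+112/15, 113/15) = (-b-16/15, -1/15)) := by
  have hP0 : F (-1) b ((-b-2), (-1)) = ((-b-2), (-3)) := by
    simp only [F, Prod.mk.injEq]
    rw [abs_of_nonneg (show (0:ℝ) ≤ (-b-2) by linarith), abs_of_nonpos (show ((-1):ℝ) ≤ 0 by norm_num)]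
    exact ⟨by ring, by ring⟩
  have hP1 : F (-1) b ((-b-2), (-3)) = ((-b), (-5)) := by
    simp only [F, Prod.mk.injEq]
    rw [abs_of_nonneg (show (0:ℝ) ≤ (-b-2) by linarith), abs_of_nonpos (show ((-3):ℝ) ≤ 0 by norm_num)]
    exact ⟨by ring, by ring⟩
  have hP2 : F (-1) b ((-b), (-5)) = ((-b+4), (-5)) := by
    simp only [F, Prod.mk.injEq]
    rw [abs_of_nonneg (show (0:ℝ) ≤ (-b) by linarith), abs_of_nonpos (show ((-5):ℝ) ≤ 0 by norm_num)]
    exact ⟨by ring, by ring⟩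
  have hP3 : F (-1) b ((-b+4), (-5)) = ((-b+8), (-1)) := by
    simp only [F, Prod.mk.injEq]
    rw [abs_of_nonneg (show (0:ℝ) ≤ (-b+4) by linarith), abs_of_nonpos (show ((-5):ℝ) ≤ 0 by norm_num)]
    exact ⟨by ring, by ring⟩
  have hP4 : F (-1) b ((-b+8), (-1)) = ((-b+8), (7)) := by
    simp only [F, Prod.mk.injEq]
    rw [abs_of_nonneg (show (0:ℝ) ≤ (-b+8) by linarith), abs_of_nonpos (show ((-1):ℝ) ≤ 0 by norm_num)]
    exact ⟨by ring, by ring⟩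
  have hP5 : F (-1) b ((-b+8), (7)) = ((-b), (1)) := by
    simp only [F, Prod.mk.injEq]
    rw [abs_of_nonneg (show (0:ℝ) ≤ (-b+8) by linarith), abs_of_nonneg (show (0:ℝ) ≤ ((7):ℝ) by norm_num)]
    exact ⟨by ring, by ring⟩
  have hP6 : F (-1) b ((-b), (1)) = ((-b-2), (-1)) := by
    simp only [F, Prod.mk.injEq]
    rw [abs_of_nonneg (show (0:ℝ) ≤ (-b) by linarith), abs_of_nonneg (show (0:ℝ) ≤ ((1):ℝ) by norm_num)]
    exact ⟨by ring, by ring⟩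
  have hQ0 : F (-1) b ((-b-16/15), (-1/15)) = ((-b-2), (-17/15)) := by
    simp only [F, Prod.mk.injEq]
    rw [abs_of_nonneg (show (0:ℝ) ≤ (-b-16/15) by linarith), abs_of_nonpos (show ((-1/15):ℝ) ≤ 0 by norm_num)]
    exact ⟨by ring, by ring⟩
  have hQ1 : F (-1) b ((-b-2), (-17/15)) = ((-b-28/15), (-47/15)) := by
    simp only [F, Prod.mk.injEq]
    rw [abs_of_nonneg (show (0:ℝ) ≤ (-b-2) by linarith), abs_of_nonpos (show ((-17/15):ℝ) ≤ 0 by norm_num)]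
    exact ⟨by ring, by ring⟩
  have hQ2 : F (-1) b ((-b-28/15), (-47/15)) = ((-b+4/15), (-5)) := by
    simp only [F, Prod.mk.injEq]
    rw [abs_of_nonneg (show (0:ℝ) ≤ (-b-28/15) by linarith), abs_of_nonpos (show ((-47/15):ℝ) ≤ 0 by norm_num)]
    exact ⟨by ring, by ring⟩
  have hQ3 : F (-1) b ((-b+4/15), (-5)) = ((-b+64/15), (-71/15)) := by
    simp only [F, Prod.mk.injEq]
    rw [abs_of_nonneg (show (0:ℝ) ≤ (-b+4/15) by linarith), abs_of_nonpos (show ((-5):ℝ) ≤ 0 by norm_num)]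
    exact ⟨by ring, by ring⟩
  have hQ4 : F (-1) b ((-b+64/15), (-71/15)) = ((-b+8), (-7/15)) := by
    simp only [F, Prod.mk.injEq]
    rw [abs_of_nonneg (show (0:ℝ) ≤ (-b+64/15) by linarith), abs_of_nonpos (show ((-71/15):ℝ) ≤ 0 by norm_num)]
    exact ⟨by ring, by ring⟩
  have hQ5 : F (-1) b ((-b+8), (-7/15)) = ((-b+112/15), (113/15)) := by
    simp only [F, Prod.mk.injEq]
    rw [abs_of_nonneg (show (0:ℝ) ≤ (-b+8) by linarith), abs_of_nonpos (show ((-7/15):ℝ) ≤ 0 by norm_num)]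
    exact ⟨by ring, by ring⟩
  have hQ6 : F (-1) b ((-b+112/15), (113/15)) = ((-b-16/15), (-1/15)) := by
    simp only [F, Prod.mk.injEq]
    rw [abs_of_nonneg (show (0:ℝ) ≤ (-b+112/15) by linarith), abs_of_nonneg (show (0:ℝ) ≤ ((113/15):ℝ) by norm_num)]
    exact ⟨by ring, by ring⟩
  have hfix : F (-1) b (-b, -1) = (-b, -1) := by
    simp only [F, Prod.mk.injEq]
    rw [abs_of_nonneg (show (0:ℝ) ≤ -b by linarith), abs_of_nonpos (show ((-1):ℝ) ≤ 0 by norm_num)]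
    exact ⟨by ring, by ring⟩
  have hPne : ((-b-2 : ℝ), (-1 : ℝ)) ≠ ((-b-2 : ℝ), (-3 : ℝ)) := by
    intro h
    have := congrArg Prod.snd h
    norm_num at this
  have hQne : ((-b-16/15 : ℝ), (-1/15 : ℝ)) ≠ ((-b-2 : ℝ), (-17/15 : ℝ)) := by
    intro h
    have := congrArg Prod.snd h
    norm_num at this
  exact ⟨hfix,
    ⟨orbit7 hP0 hP1 hP2 hP3 hP4 hP5 hP6 hPne, hP0, hP1, hP2, hP3, hP4, hP5, hP6⟩,
    ⟨orbit7 hQ0 hQ1 hQ2 hQ3 hQ4 hQ5 hQ6 hQne, hQ0, hQ1, hQ2, hQ3, hQ4, hQ5, hQ6⟩⟩
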